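/- arXiv:1409.4028 — 2 statements merged into one kernel-verified Lean document; each statement's English description precedes it below -/
import Mathlib

section
/- Let c : ℝ≥0 × U → ℝ≥0 be continuous and bounded by C̃, let Λ^n, Λ : ℝ≥0 → [0, M] be measurable with ∫₀^t Λ^n(s) ds → ∫₀^t Λ(s) ds for each t ≥ 0, let α > 0, and let r^n → r in the weak* sense of relaxed controls. Then ∫₀^∞ e^{−αy} exp(−∫₀^y Λ^n(s)ds) ∫_U c(y,u) r^n_y(du) dy → ∫₀^∞ e^{−αy} exp(−∫₀^y Λ(s)ds) ∫_U c(y,u) r_y(du) dy, provided each Λ^n(y) = ∫_U λ(y,u) r^n_y(du) for a fixed jointly continuous λ : ℝ≥0 × U → [0,M]. -/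
open MeasureTheory Set Filter Topology

private lemma cum_continuous {M : ℝ} (L : ℝ → ℝ) (hmeas : Measurable L)
    (hmem : ∀ y, L y ∈ Icc (0 : ℝ) M) :
    Continuous (fun y => ∫ s in Ioc (0 : ℝ) y, L s) := by
  have hii : ∀ a b : ℝ, IntervalIntegrable L volume a b := by
    intro a b
    refine IntervalIntegrable.mono_fun' (intervalIntegrable_const (c := M))
      hmeas.aestronglyMeasurable ?_
    refine Filter.Eventually.of_forall fun s => ?_
    simp only [Real.norm_eq_abs]
    rw [abs_of_nonneg (hmem s).1]
    exact (hmem s).2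
  have hcont := intervalIntegral.continuous_primitive hii 0
  have heq : (fun y => ∫ s in Ioc (0 : ℝ) y, L s)
      = fun y => ∫ s in (0 : ℝ)..(max y 0), L s := by
    funext y
    rcases le_or_gt y 0 with hy | hy
    · rw [max_eq_right hy, intervalIntegral.integral_same, Ioc_eq_empty (not_lt.2 hy),
        Measure.restrict_empty, integral_zero_measure]
    · rw [max_eq_left hy.le, intervalIntegral.integral_of_le hy.le]
  rw [heq]
  exact hcont.comp (continuous_id.max continuous_const)

/-- Continuity of the expected one-stage discounted cost along a weak*-convergent
sequence of relaxed controls: if the cumulative hazards converge pointwise and the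
relaxed controls converge in the weak* sense, then the one-stage discounted costs
converge. -/
theorem one_stage_discounted_cost_converges
    {U : Type*} [MetricSpace U] [CompactSpace U] [Nonempty U] [MeasurableSpace U]
    [BorelSpace U]
    (c : ℝ → U → ℝ) (hccont : Continuous (Function.uncurry c))
    (C : ℝ) (hC : 0 < C) (hcnonneg : ∀ y u, 0 ≤ c y u) (hcbdd : ∀ y u, c y u ≤ C)
    (M : ℝ) (hM : 0 < M)
    (lam : ℝ → U → ℝ) (hlamcont : Continuous (Function.uncurry lam))
    (hlammem : ∀ y u, lam y u ∈ Icc (0 : ℝ) M)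
    (r : ℕ → ℝ → Measure U) (rlim : ℝ → Measure U)
    (hrprob : ∀ n y, IsProbabilityMeasure (r n y))
    (hrlimprob : ∀ y, IsProbabilityMeasure (rlim y))
    (Lam : ℕ → ℝ → ℝ) (LamLim : ℝ → ℝ)
    (hLam : ∀ n y, Lam n y = ∫ u, lam y u ∂(r n y))
    (hLamLim : ∀ y, LamLim y = ∫ u, lam y u ∂(rlim y))
    (hLammeas : ∀ n, Measurable (Lam n)) (hLamLimmeas : Measurable LamLim)
    (hLammem : ∀ n y, Lam n y ∈ Icc (0 : ℝ) M)
    (hLamLimmem : ∀ y, LamLim y ∈ Icc (0 : ℝ) M)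
    (hcum : ∀ t : ℝ, 0 ≤ t →
      Tendsto (fun n => ∫ s in Ioc (0 : ℝ) t, Lam n s) atTop
        (𝓝 (∫ s in Ioc (0 : ℝ) t, LamLim s)))
    (α : ℝ) (hα : 0 < α)
    (hconv : ∀ f : ℝ → U → ℝ,
      Measurable (Function.uncurry f) → (∀ y, Continuous (f y)) →
      Integrable (fun y => ⨆ u, |f y u|) (volume.restrict (Ioi (0 : ℝ))) →
      Tendsto (fun n => ∫ y in Ioi (0 : ℝ), ∫ u, f y u ∂(r n y)) atTop
        (𝓝 (∫ y in Ioi (0 : ℝ), ∫ u, f y u ∂(rlim y)))) :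
    Tendsto (fun n => ∫ y in Ioi (0 : ℝ),
        Real.exp (-α * y) * Real.exp (-∫ s in Ioc (0 : ℝ) y, Lam n s) *
          ∫ u, c y u ∂(r n y)) atTop
      (𝓝 (∫ y in Ioi (0 : ℝ),
        Real.exp (-α * y) * Real.exp (-∫ s in Ioc (0 : ℝ) y, LamLim s) *
          ∫ u, c y u ∂(rlim y))) := by
  -- abbreviations
  set cum : ℕ → ℝ → ℝ := fun n y => ∫ s in Ioc (0 : ℝ) y, Lam n s with hcumdef
  set cumL : ℝ → ℝ := fun y => ∫ s in Ioc (0 : ℝ) y, LamLim s with hcumLdef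
  have hcumcont : ∀ n, Continuous (cum n) :=
    fun n => cum_continuous (Lam n) (hLammeas n) (hLammem n)
  have hcumLcont : Continuous cumL := cum_continuous LamLim hLamLimmeas hLamLimmem
  have hcumnonneg : ∀ n y, 0 ≤ cum n y := fun n y =>
    setIntegral_nonneg measurableSet_Ioc fun s _ => (hLammem n s).1
  have hcumLnonneg : ∀ y, 0 ≤ cumL y := fun y =>
    setIntegral_nonneg measurableSet_Ioc fun s _ => (hLamLimmem s).1
  set S : (ℝ → Measure U) → ℝ → ℝ := fun ρ y => ∫ u, c y u ∂(ρ y) with hSdef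
  have hcicont : ∀ y : ℝ, Continuous (c y) := fun y => hccont.comp (Continuous.prodMk_right y)
  have hcint : ∀ (μ : Measure U) [IsProbabilityMeasure μ] (y : ℝ),
      Integrable (c y) μ := by
    intro μ _ y
    refine Integrable.mono' (integrable_const C) (hcicont y).aestronglyMeasurable ?_
    exact Filter.Eventually.of_forall fun u => by
      simp only [Real.norm_eq_abs]; rw [abs_of_nonneg (hcnonneg y u)]; exact hcbdd y u
  have hS0 : ∀ (ρ : ℝ → Measure U) y, 0 ≤ S ρ y := fun ρ y =>
    integral_nonneg fun u => hcnonneg y u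
  have hSC : ∀ (ρ : ℝ → Measure U), (∀ y, IsProbabilityMeasure (ρ y)) → ∀ y, S ρ y ≤ C := by
    intro ρ hρ y
    have := hρ y
    calc S ρ y ≤ ∫ _u, C ∂(ρ y) := integral_mono (hcint (ρ y) y) (integrable_const C)
          fun u => hcbdd y u
      _ = C := by simp
  -- the exponential weight with the limiting hazard
  set w : ℝ → ℝ := fun y => Real.exp (-α * y) * Real.exp (-cumL y) with hwdef
  have hwcont : Continuous w :=
    ((Real.continuous_exp.comp ((continuous_const.mul continuous_id))).mul
      (Real.continuous_exp.comp hcumLcont.neg))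
  have hwpos : ∀ y, 0 < w y := fun y => mul_pos (Real.exp_pos _) (Real.exp_pos _)
  have hwle : ∀ y, w y ≤ Real.exp (-α * y) := by
    intro y
    have h1 : Real.exp (-cumL y) ≤ 1 := Real.exp_le_one_iff.2 (neg_nonpos.2 (hcumLnonneg y))
    calc w y ≤ Real.exp (-α * y) * 1 := by
          exact mul_le_mul_of_nonneg_left h1 (Real.exp_pos _).le
      _ = Real.exp (-α * y) := mul_one _
  have hexpint : IntegrableOn (fun y => Real.exp (-α * y)) (Ioi (0 : ℝ)) volume :=
    exp_neg_integrableOn_Ioi 0 hα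
  -- Step 1 : convergence of the term with the limiting weight, via `hconv`
  set f : ℝ → U → ℝ := fun y u => w y * c y u with hfdef
  have hfcont : Continuous (Function.uncurry f) :=
    (hwcont.comp continuous_fst).mul hccont
  have hsup_eq : ∀ y, (⨆ u, |f y u|) = sSup ((fun u => f y u) '' univ) := by
    intro y
    have habs : ∀ u, |f y u| = f y u := fun u =>
      abs_of_nonneg (mul_nonneg (hwpos y).le (hcnonneg y u))
    simp only [habs]
    rw [image_univ]
    exact (sSup_range).symm
  have hsupcont : Continuous (fun y => ⨆ u, |f y u|) := by
    have := isCompact_univ.continuous_sSup (f := f) hfcont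
    simpa only [← hsup_eq] using this
  have hsupint : Integrable (fun y => ⨆ u, |f y u|) (volume.restrict (Ioi (0 : ℝ))) := by
    refine Integrable.mono' (g := fun y => C * Real.exp (-α * y)) (hexpint.const_mul C)
      hsupcont.aestronglyMeasurable ?_
    refine Filter.Eventually.of_forall fun y => ?_
    have hble : ∀ u, |f y u| ≤ C * Real.exp (-α * y) := by
      intro u
      have habs : |f y u| = w y * c y u :=
        abs_of_nonneg (mul_nonneg (hwpos y).le (hcnonneg y u))
      rw [habs]
      have h1 := hwle y
      have h2 := hcbdd y u
      have h3 := hcnonneg y u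
      nlinarith [Real.exp_pos (-α * y), (hwpos y).le]
    have hbdd : BddAbove (range fun u => |f y u|) := by
      refine ⟨C * Real.exp (-α * y), ?_⟩
      rintro z ⟨u, rfl⟩
      exact hble u
    have hnn : 0 ≤ ⨆ u, |f y u| :=
      le_ciSup_of_le hbdd (Classical.arbitrary U) (abs_nonneg _)
    rw [Real.norm_eq_abs, abs_of_nonneg hnn]
    exact ciSup_le hble
  have hfmeas : Measurable (Function.uncurry f) := hfcont.measurable
  have hfycont : ∀ y, Continuous (f y) := fun y => continuous_const.mul (hcicont y)
  have hK := hconv f hfmeas hfycont hsupint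
  have hKrw : ∀ (μ : Measure U) (y : ℝ), (∫ u, f y u ∂μ) = w y * ∫ u, c y u ∂μ := by
    intro μ y
    exact integral_const_mul (w y) (c y)
  simp only [hKrw] at hK
  -- hK : Tendsto (fun n => ∫ y in Ioi 0, w y * S (r n) y) atTop (𝓝 (∫ y in Ioi 0, w y * S rlim y))
  -- Step 2 : the difference of exponential weights tends to zero in L¹
  set F : ℕ → ℝ → ℝ := fun n y =>
    Real.exp (-α * y) * |Real.exp (-cum n y) - Real.exp (-cumL y)| with hFdef
  have hFnonneg : ∀ n y, 0 ≤ F n y := fun n y =>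
    mul_nonneg (Real.exp_pos _).le (abs_nonneg _)
  have hFcont : ∀ n, Continuous (F n) := fun n =>
    ((Real.continuous_exp.comp (continuous_const.mul continuous_id))).mul
      ((Real.continuous_exp.comp (hcumcont n).neg).sub
        (Real.continuous_exp.comp hcumLcont.neg)).abs
  have hFle : ∀ n y, F n y ≤ 2 * Real.exp (-α * y) := by
    intro n y
    have h1 : Real.exp (-cum n y) ≤ 1 := Real.exp_le_one_iff.2 (neg_nonpos.2 (hcumnonneg n y))
    have h2 : Real.exp (-cumL y) ≤ 1 := Real.exp_le_one_iff.2 (neg_nonpos.2 (hcumLnonneg y))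
    have h3 : |Real.exp (-cum n y) - Real.exp (-cumL y)| ≤ 2 := by
      rw [abs_le]
      constructor <;> nlinarith [Real.exp_pos (-cum n y), Real.exp_pos (-cumL y)]
    calc F n y ≤ Real.exp (-α * y) * 2 :=
          mul_le_mul_of_nonneg_left h3 (Real.exp_pos _).le
      _ = 2 * Real.exp (-α * y) := mul_comm _ _
  have hFint : ∀ n, Integrable (F n) (volume.restrict (Ioi (0 : ℝ))) := by
    intro n
    refine Integrable.mono' (g := fun y => 2 * Real.exp (-α * y)) (hexpint.const_mul 2)
      (hFcont n).aestronglyMeasurable ?_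
    exact Filter.Eventually.of_forall fun y => by
      rw [Real.norm_eq_abs, abs_of_nonneg (hFnonneg n y)]; exact hFle n y
  have hD : Tendsto (fun n => ∫ y in Ioi (0 : ℝ), F n y) atTop (𝓝 0) := by
    have := tendsto_integral_of_dominated_convergence
      (F := fun n y => F n y) (f := fun _ : ℝ => (0 : ℝ))
      (bound := fun y => 2 * Real.exp (-α * y))
      (fun n => (hFcont n).aestronglyMeasurable)
      (hexpint.const_mul 2)
      (fun n => Filter.Eventually.of_forall fun y => by
        rw [Real.norm_eq_abs, abs_of_nonneg (hFnonneg n y)]; exact hFle n y)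
      ?_
    · simpa using this
    · filter_upwards [ae_restrict_mem measurableSet_Ioi] with y hy
      have h1 : Tendsto (fun n => cum n y) atTop (𝓝 (cumL y)) := hcum y (le_of_lt hy)
      have h2 : Tendsto (fun n => Real.exp (-cum n y)) atTop (𝓝 (Real.exp (-cumL y))) :=
        (Real.continuous_exp.tendsto _).comp h1.neg
      have h3 : Tendsto (fun n => Real.exp (-cum n y) - Real.exp (-cumL y)) atTop (𝓝 0) := by
        simpa using h2.sub_const (Real.exp (-cumL y))
      have h4 := (tendsto_const_nhds (x := Real.exp (-α * y))).mul h3.abs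
      simpa [hFdef] using h4
  -- Step 3 : bound on the difference between the two weighted integrals
  have hdiff : ∀ n,
      |(∫ y in Ioi (0 : ℝ), Real.exp (-α * y) * Real.exp (-cum n y) * S (r n) y) -
        (∫ y in Ioi (0 : ℝ), w y * S (r n) y)| ≤ C * ∫ y in Ioi (0 : ℝ), F n y := by
    intro n
    have hCFint : Integrable (fun y => C * F n y) (volume.restrict (Ioi (0 : ℝ))) :=
      (hFint n).const_mul C
    have hintF : 0 ≤ ∫ y in Ioi (0 : ℝ), F n y :=
      integral_nonneg fun y => hFnonneg n y
    by_cases hmeasS : AEStronglyMeasurable (S (r n)) (volume.restrict (Ioi (0 : ℝ)))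
    · set h : ℝ → ℝ := fun y => Real.exp (-α * y) * Real.exp (-cum n y) * S (r n) y with hhdef
      set k : ℝ → ℝ := fun y => w y * S (r n) y with hkdef
      have hbd : ∀ (e : ℝ → ℝ), Continuous e → (∀ y, 0 < e y) →
          (∀ y, e y ≤ Real.exp (-α * y)) →
          Integrable (fun y => e y * S (r n) y) (volume.restrict (Ioi (0 : ℝ))) := by
        intro e hec hepos hele
        refine Integrable.mono' (g := fun y => C * Real.exp (-α * y)) (hexpint.const_mul C)
          (hec.aestronglyMeasurable.mul hmeasS) ?_
        refine Filter.Eventually.of_forall fun y => ?_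
        rw [Real.norm_eq_abs, abs_of_nonneg (mul_nonneg (hepos y).le (hS0 (r n) y))]
        have h1 := hele y
        have h2 := hSC (r n) (hrprob n) y
        have h3 := hS0 (r n) y
        show e y * S (r n) y ≤ C * Real.exp (-α * y)
        nlinarith [mul_le_mul_of_nonneg_right h1 h3,
          mul_le_mul_of_nonneg_left h2 (Real.exp_pos (-α * y)).le]
      have hh : Integrable h (volume.restrict (Ioi (0 : ℝ))) := by
        have := hbd (fun y => Real.exp (-α * y) * Real.exp (-cum n y))
          ((Real.continuous_exp.comp (continuous_const.mul continuous_id)).mul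
            (Real.continuous_exp.comp (hcumcont n).neg))
          (fun y => mul_pos (Real.exp_pos _) (Real.exp_pos _))
          (fun y => by
            have h1 : Real.exp (-cum n y) ≤ 1 :=
              Real.exp_le_one_iff.2 (neg_nonpos.2 (hcumnonneg n y))
            show Real.exp (-α * y) * Real.exp (-cum n y) ≤ Real.exp (-α * y)
            nlinarith [mul_le_mul_of_nonneg_left h1 (Real.exp_pos (-α * y)).le])
        simpa [hhdef] using this
      have hk : Integrable k (volume.restrict (Ioi (0 : ℝ))) := hbd w hwcont hwpos hwle
      have hptwise : ∀ y, |h y - k y| ≤ C * F n y := by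
        intro y
        have heq : h y - k y =
            (Real.exp (-α * y) * (Real.exp (-cum n y) - Real.exp (-cumL y))) * S (r n) y := by
          simp only [hhdef, hkdef, hwdef]; ring
        rw [heq, abs_mul, abs_mul, abs_of_nonneg (Real.exp_pos (-α * y)).le,
          abs_of_nonneg (hS0 (r n) y)]
        have h2 := hSC (r n) (hrprob n) y
        have h3 := hS0 (r n) y
        have h4 : 0 ≤ Real.exp (-α * y) * |Real.exp (-cum n y) - Real.exp (-cumL y)| :=
          mul_nonneg (Real.exp_pos _).le (abs_nonneg _)
        calc Real.exp (-α * y) * |Real.exp (-cum n y) - Real.exp (-cumL y)| * S (r n) y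
            ≤ Real.exp (-α * y) * |Real.exp (-cum n y) - Real.exp (-cumL y)| * C := by
              exact mul_le_mul_of_nonneg_left h2 h4
          _ = C * F n y := by rw [hFdef]; ring
      calc |(∫ y in Ioi (0 : ℝ), h y) - ∫ y in Ioi (0 : ℝ), k y|
          = |∫ y in Ioi (0 : ℝ), (h y - k y)| := by rw [integral_sub hh hk]
        _ ≤ ∫ y in Ioi (0 : ℝ), |h y - k y| := by
            simpa [Real.norm_eq_abs] using norm_integral_le_integral_norm (fun y => h y - k y)
              (μ := volume.restrict (Ioi (0 : ℝ)))
        _ ≤ ∫ y in Ioi (0 : ℝ), C * F n y :=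
            integral_mono (hh.sub hk).abs hCFint fun y => hptwise y
        _ = C * ∫ y in Ioi (0 : ℝ), F n y := integral_const_mul C (F n)
    · -- neither integrand is a.e. strongly measurable, so both integrals are zero
      have hnm : ∀ (e : ℝ → ℝ), Continuous e → (∀ y, 0 < e y) →
          ¬ Integrable (fun y => e y * S (r n) y) (volume.restrict (Ioi (0 : ℝ))) := by
        intro e hec hepos hint
        apply hmeasS
        have : AEStronglyMeasurable (fun y => (e y * S (r n) y) * (e y)⁻¹)
            (volume.restrict (Ioi (0 : ℝ))) :=
          hint.aestronglyMeasurable.mul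
            (hec.inv₀ fun y => (hepos y).ne').aestronglyMeasurable
        have heq : (fun y => (e y * S (r n) y) * (e y)⁻¹) = S (r n) := by
          funext y
          rw [mul_comm (e y), mul_assoc, mul_inv_cancel₀ (hepos y).ne', mul_one]
        rwa [heq] at this
      have h1 : ¬ Integrable (fun y => Real.exp (-α * y) * Real.exp (-cum n y) * S (r n) y)
          (volume.restrict (Ioi (0 : ℝ))) :=
        hnm (fun y => Real.exp (-α * y) * Real.exp (-cum n y))
          ((Real.continuous_exp.comp (continuous_const.mul continuous_id)).mul
            (Real.continuous_exp.comp (hcumcont n).neg))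
          (fun y => mul_pos (Real.exp_pos _) (Real.exp_pos _))
      have h2 : ¬ Integrable (fun y => w y * S (r n) y)
          (volume.restrict (Ioi (0 : ℝ))) := hnm w hwcont hwpos
      rw [integral_undef h1, integral_undef h2, sub_zero, abs_zero]
      exact mul_nonneg hC.le hintF
  -- Step 4 : conclude
  have hgoal_eq : ∀ n, (∫ y in Ioi (0 : ℝ),
      Real.exp (-α * y) * Real.exp (-∫ s in Ioc (0 : ℝ) y, Lam n s) * ∫ u, c y u ∂(r n y))
      = (∫ y in Ioi (0 : ℝ), Real.exp (-α * y) * Real.exp (-cum n y) * S (r n) y) := by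
    intro n; rfl
  have hdzero : Tendsto (fun n =>
      (∫ y in Ioi (0 : ℝ), Real.exp (-α * y) * Real.exp (-cum n y) * S (r n) y) -
        ∫ y in Ioi (0 : ℝ), w y * S (r n) y) atTop (𝓝 0) := by
    refine squeeze_zero_norm (a := fun n => C * ∫ y in Ioi (0 : ℝ), F n y) (fun n => ?_) ?_
    · rw [Real.norm_eq_abs]; exact hdiff n
    · have := hD.const_mul C
      simpa using this
  have hfinal := hdzero.add hK
  simp only [hSdef, sub_add_cancel, zero_add] at hfinal
  exact hfinal
end

section
/- Fix α > 0, a jointly continuous bounded rate λ : ℝ≥0 × U → [0,M] with inf λ ≥ m > 0, and a continuous bounded cost c. For r in the relaxed control space R define f(r) = ∫₀^∞ e^{−αy} exp(−∫₀^y ∫_U λ(s,u) r_s(du) ds) ∫_U c(y,u) r_y(du) dy. Then f attains its infimum over R, i.e., there exists r* ∈ R with f(r*) = inf_{r∈R} f(r). -/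
open MeasureTheory Set Filter Topology

/-- Auxiliary: the primitive `y ↦ ∫_{(0,y]} h` of a bounded nonnegative function is
measurable, even without any measurability assumptions on `h` (junk values included). -/
lemma measurable_primitive_aux {h : ℝ → ℝ} {M : ℝ} (h0 : ∀ s, 0 ≤ h s) (hM : ∀ s, h s ≤ M) :
    Measurable fun y => ∫ s in Ioc (0:ℝ) y, h s := by
  set G : ℝ → ℝ := fun y => ∫ s in Ioc (0:ℝ) y, h s with hG
  set A : Set ℝ := {y | IntegrableOn h (Ioc 0 y) volume} with hA
  have hM0 : 0 ≤ M := le_trans (h0 0) (hM 0)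
  have hdc : ∀ {y z : ℝ}, y ∈ A → z ≤ y → z ∈ A := by
    intro y z hy hzy
    exact hy.mono_set (Ioc_subset_Ioc_right hzy)
  have hAmeas : MeasurableSet A := by
    have : A.OrdConnected := ⟨fun u _ v hv z hz => hdc hv hz.2⟩
    exact this.measurableSet
  have hGnn : ∀ y, 0 ≤ G y := fun y => setIntegral_nonneg measurableSet_Ioc fun s _ => h0 s
  have hGle : ∀ y, G y ≤ M * max y 0 := by
    intro y
    by_cases hy : y ∈ A
    · have h1 : G y ≤ ∫ _ in Ioc (0:ℝ) y, M := by
        exact setIntegral_mono_on hy (integrableOn_const measure_Ioc_lt_top.ne)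
          measurableSet_Ioc fun s _ => hM s
      have h2 : (∫ _ in Ioc (0:ℝ) y, M) = (volume (Ioc (0:ℝ) y)).toReal * M := by
        rw [setIntegral_const, smul_eq_mul]; rfl
      have h3 : (volume (Ioc (0:ℝ) y)).toReal = max y 0 := by
        rw [Real.volume_Ioc, ENNReal.toReal_ofReal', sub_zero]
      calc G y ≤ (volume (Ioc (0:ℝ) y)).toReal * M := h2 ▸ h1
        _ = M * max y 0 := by rw [h3, mul_comm]
    · have : G y = 0 := integral_undef hy
      rw [this]
      exact mul_nonneg hM0 (le_max_right _ _)
  have hGmono : ∀ {y z : ℝ}, z ∈ A → y ≤ z → G y ≤ G z := by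
    intro y z hz hyz
    exact setIntegral_mono_set hz (Eventually.of_forall fun s => h0 s)
      ((Ioc_subset_Ioc_right hyz).eventuallyLE)
  set G' : ℝ → ℝ := fun y => sSup (insert 0 (G '' (A ∩ Iic y))) with hG'
  have hbdd : ∀ y, ∀ x ∈ insert 0 (G '' (A ∩ Iic y)), x ≤ M * max y 0 := by
    rintro y x (rfl | ⟨z, ⟨hzA, hzy⟩, rfl⟩)
    · exact mul_nonneg hM0 (le_max_right _ _)
    · exact le_trans (hGle z) (mul_le_mul_of_nonneg_left (max_le_max hzy le_rfl) hM0)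
  have hG'mono : Monotone G' := by
    intro a b hab
    refine csSup_le_csSup ⟨M * max b 0, fun x hx => hbdd b x hx⟩ (insert_nonempty _ _) ?_
    exact insert_subset_insert (image_mono (inter_subset_inter Subset.rfl
      (Iic_subset_Iic.2 hab)))
  have hkey : G = A.indicator G' := by
    funext y
    by_cases hy : y ∈ A
    · rw [indicator_of_mem hy]
      refine le_antisymm ?_ ?_
      · exact le_csSup ⟨M * max y 0, fun x hx => hbdd y x hx⟩
          (mem_insert_of_mem _ ⟨y, ⟨hy, mem_Iic.2 le_rfl⟩, rfl⟩)
      · refine csSup_le (insert_nonempty _ _) ?_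
        rintro x (rfl | ⟨z, ⟨hzA, hzy⟩, rfl⟩)
        · exact hGnn y
        · exact hGmono hy hzy
    · rw [indicator_of_notMem hy]
      exact integral_undef hy
  rw [hkey]
  exact hG'mono.measurable.indicator hAmeas

/-- Auxiliary: for a jointly continuous function on `ℝ × U` with `U` compact,
`y ↦ ⨆ u, |g y u|` is continuous. -/
lemma continuous_sup_abs_aux {U : Type*} [MetricSpace U] [CompactSpace U] [Nonempty U]
    {g : ℝ → U → ℝ} (hg : Continuous (Function.uncurry g)) :
    Continuous fun y => ⨆ u, |g y u| := by
  have key : (fun y => ⨆ u, |g y u|)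
      = fun y => ‖(ContinuousMap.curry ⟨Function.uncurry g, hg⟩) y‖ := by
    funext y
    rw [ContinuousMap.norm_eq_iSup_norm]
    simp only [Real.norm_eq_abs]
    rfl
  rw [key]
  exact continuous_norm.comp (ContinuousMap.curry ⟨Function.uncurry g, hg⟩).continuous

set_option maxHeartbeats 1000000 in
/-- The expected one-stage discounted cost attains its infimum over the (compact
metric) relaxed control space `R`. Here `R` is a nonempty compact metric space whose
points are interpreted as relaxed controls via `ρ`, and the weak* pairing with every
`L¹([0,∞); C(U))` integrand is assumed continuous in the control (this is the weak*
topology on `R`). -/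
theorem one_stage_cost_attains_min
    {U : Type*} [MetricSpace U] [CompactSpace U] [Nonempty U] [MeasurableSpace U]
    [BorelSpace U]
    {R : Type*} [MetricSpace R] [CompactSpace R] [Nonempty R]
    (ρ : R → ℝ → Measure U) (hρprob : ∀ r y, IsProbabilityMeasure (ρ r y))
    (hweakstar : ∀ f : ℝ → U → ℝ,
      Measurable (Function.uncurry f) → (∀ y, Continuous (f y)) →
      Integrable (fun y => ⨆ u, |f y u|) (volume.restrict (Ioi (0 : ℝ))) →
      Continuous (fun r : R => ∫ y in Ioi (0 : ℝ), ∫ u, f y u ∂(ρ r y)))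
    (α : ℝ) (hα : 0 < α)
    (M m : ℝ) (hm : 0 < m) (hmM : m ≤ M)
    (lam : ℝ → U → ℝ) (hlamcont : Continuous (Function.uncurry lam))
    (hlammem : ∀ y u, lam y u ∈ Icc m M)
    (c : ℝ → U → ℝ) (hccont : Continuous (Function.uncurry c))
    (C : ℝ) (hcmem : ∀ y u, c y u ∈ Icc (0 : ℝ) C)
    (F : R → ℝ)
    (hF : ∀ r : R, F r = ∫ y in Ioi (0 : ℝ),
        Real.exp (-α * y) *
          Real.exp (-∫ s in Ioc (0 : ℝ) y, ∫ u, lam s u ∂(ρ r s)) *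
          ∫ u, c y u ∂(ρ r y)) :
    ∃ rstar : R, ∀ r : R, F rstar ≤ F r := by
  classical
  -- abbreviations
  let w : ℝ → ℝ := fun y => Real.exp (-α * y)
  let h : R → ℝ → ℝ := fun r s => ∫ u, lam s u ∂(ρ r s)
  let Λ : R → ℝ → ℝ := fun r y => ∫ s in Ioc (0:ℝ) y, h r s
  let E : R → ℝ → ℝ := fun r y => Real.exp (-Λ r y)
  let Cc : R → ℝ → ℝ := fun r y => ∫ u, c y u ∂(ρ r y)
  have hFr : ∀ r, F r = ∫ y in Ioi (0:ℝ), w y * E r y * Cc r y := fun r => hF r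
  have hC0 : 0 ≤ C := le_trans (hcmem 0 (Classical.arbitrary U)).1
    (hcmem 0 (Classical.arbitrary U)).2
  have hM0 : 0 ≤ M := le_trans hm.le hmM
  -- basic bounds
  have hint_lam : ∀ (r : R) (s : ℝ), Integrable (fun u => lam s u) (ρ r s) := by
    intro r s
    haveI := hρprob r s
    refine Integrable.mono' (integrable_const M)
      ((hlamcont.comp (Continuous.prodMk_right s)).aestronglyMeasurable)
      (Eventually.of_forall fun u => ?_)
    rw [Real.norm_eq_abs, abs_le]
    constructor
    · linarith [(hlammem s u).1]
    · exact (hlammem s u).2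
  have hint_c : ∀ (r : R) (y : ℝ), Integrable (fun u => c y u) (ρ r y) := by
    intro r y
    haveI := hρprob r y
    refine Integrable.mono' (integrable_const C)
      ((hccont.comp (Continuous.prodMk_right y)).aestronglyMeasurable)
      (Eventually.of_forall fun u => ?_)
    rw [Real.norm_eq_abs, abs_le]
    exact ⟨by linarith [(hcmem y u).1], (hcmem y u).2⟩
  have hh0 : ∀ r s, 0 ≤ h r s := fun r s => integral_nonneg fun u => le_trans hm.le (hlammem s u).1
  have hhM : ∀ r s, h r s ≤ M := by
    intro r s
    haveI := hρprob r s
    calc h r s ≤ ∫ _, M ∂(ρ r s) :=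
          integral_mono (hint_lam r s) (integrable_const M) fun u => (hlammem s u).2
      _ = M := by simp
  have hCcmem : ∀ r y, 0 ≤ Cc r y ∧ Cc r y ≤ C := by
    intro r y
    haveI := hρprob r y
    constructor
    · exact integral_nonneg fun u => (hcmem y u).1
    · calc Cc r y ≤ ∫ _, C ∂(ρ r y) :=
            integral_mono (hint_c r y) (integrable_const C) fun u => (hcmem y u).2
        _ = C := by simp
  have hΛmeas : ∀ r, Measurable (Λ r) := fun r => measurable_primitive_aux (hh0 r) (hhM r)
  have hΛnonneg : ∀ r y, 0 ≤ Λ r y := fun r y =>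
    setIntegral_nonneg measurableSet_Ioc fun s _ => hh0 r s
  have hEmeas : ∀ r, Measurable (E r) := fun r => Real.measurable_exp.comp (hΛmeas r).neg
  have hEpos : ∀ r y, 0 < E r y := fun r y => Real.exp_pos _
  have hEle1 : ∀ r y, E r y ≤ 1 := fun r y =>
    Real.exp_le_one_iff.2 (neg_nonpos.2 (hΛnonneg r y))
  have hwmeas : Measurable w := Real.measurable_exp.comp (measurable_id.const_mul (-α))
  have hwpos : ∀ y, 0 < w y := fun y => Real.exp_pos _
  have hwint : Integrable w (volume.restrict (Ioi (0:ℝ))) := exp_neg_integrableOn_Ioi 0 hα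
  -- continuity in r of the accumulated hazard Λ · t
  have hΛcont : ∀ t : ℝ, Continuous fun r => Λ r t := by
    intro t
    set f : ℝ → U → ℝ := fun s u => (Ioc (0:ℝ) t).indicator (fun _ => (1:ℝ)) s * lam s u with hf
    have hmeasf : Measurable (Function.uncurry f) := by
      have h1 : Measurable fun p : ℝ × U => (Ioc (0:ℝ) t).indicator (fun _ => (1:ℝ)) p.1 :=
        (measurable_const.indicator measurableSet_Ioc).comp measurable_fst
      exact h1.mul hlamcont.measurable
    have hcontf : ∀ s, Continuous (f s) := fun s =>
      continuous_const.mul (hlamcont.comp (Continuous.prodMk_right s))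
    have hsupf : (fun y => ⨆ u, |f y u|)
        = (Ioc (0:ℝ) t).indicator (fun y => ⨆ u, |lam y u|) := by
      funext y
      by_cases hy : y ∈ Ioc (0:ℝ) t
      · simp only [hf, indicator_of_mem hy, one_mul]
      · simp only [hf, indicator_of_notMem hy, zero_mul, abs_zero, ciSup_const]
    have hintf : Integrable (fun y => ⨆ u, |f y u|) (volume.restrict (Ioi (0:ℝ))) := by
      rw [hsupf]
      refine Integrable.mono' (g := (Ioc (0:ℝ) t).indicator fun _ => M) ?_ ?_ ?_
      · rw [integrable_indicator_iff measurableSet_Ioc]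
        refine integrableOn_const (ne_of_lt ?_)
        exact lt_of_le_of_lt (Measure.restrict_apply_le _ _) measure_Ioc_lt_top
      · exact ((continuous_sup_abs_aux hlamcont).measurable.indicator
          measurableSet_Ioc).aestronglyMeasurable
      · refine Eventually.of_forall fun y => ?_
        by_cases hy : y ∈ Ioc (0:ℝ) t
        · rw [indicator_of_mem hy, indicator_of_mem hy, Real.norm_eq_abs]
          have hub : (⨆ u, |lam y u|) ≤ M := by
            refine ciSup_le fun u => ?_
            rw [abs_le]
            exact ⟨by linarith [(hlammem y u).1], (hlammem y u).2⟩
          have hnn : 0 ≤ ⨆ u, |lam y u| :=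
            Real.iSup_nonneg fun u => abs_nonneg _
          rw [abs_of_nonneg hnn]
          exact hub
        · rw [indicator_of_notMem hy, indicator_of_notMem hy, norm_zero]
    have hcont := hweakstar f hmeasf hcontf hintf
    have heq : (fun r : R => ∫ y in Ioi (0:ℝ), ∫ u, f y u ∂(ρ r y)) = fun r => Λ r t := by
      funext r
      have h1 : ∀ y, (∫ u, f y u ∂(ρ r y))
          = (Ioc (0:ℝ) t).indicator (h r) y := by
        intro y
        by_cases hy : y ∈ Ioc (0:ℝ) t
        · simp only [hf, indicator_of_mem hy, one_mul]; rfl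
        · simp only [hf, indicator_of_notMem hy, zero_mul, integral_zero]
      simp only [h1]
      rw [setIntegral_indicator measurableSet_Ioc,
        inter_eq_self_of_subset_right Ioc_subset_Ioi_self]
    rw [heq] at hcont
    exact hcont
  -- nonnegativity of F
  have hFnonneg : ∀ r, 0 ≤ F r := by
    intro r
    rw [hFr r]
    refine setIntegral_nonneg measurableSet_Ioi fun y _ => ?_
    exact mul_nonneg (mul_nonneg (hwpos y).le (hEpos r y).le) (hCcmem r y).1
  by_cases h0 : ∃ r0, F r0 = 0
  · obtain ⟨r0, hr0⟩ := h0
    exact ⟨r0, fun r => hr0 ▸ hFnonneg r⟩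
  push_neg at h0
  -- integrability of the full integrand
  have hIint : ∀ r, Integrable (fun y => w y * E r y * Cc r y) (volume.restrict (Ioi (0:ℝ))) := by
    intro r
    by_contra hni
    exact h0 r (by rw [hFr r, integral_undef hni])
  have hCcmeas : ∀ r, AEStronglyMeasurable (Cc r) (volume.restrict (Ioi (0:ℝ))) := by
    intro r
    have hkey : Cc r = fun y => (w y * E r y * Cc r y) / (w y * E r y) := by
      funext y
      exact (mul_div_cancel_left₀ (Cc r y) (mul_pos (hwpos y) (hEpos r y)).ne').symm
    rw [hkey]
    exact ((hIint r).1.aemeasurable.div ((hwmeas.mul (hEmeas r)).aemeasurable)).aestronglyMeasurable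
  have hint2 : ∀ r r', Integrable (fun y => w y * E r y * Cc r' y)
      (volume.restrict (Ioi (0:ℝ))) := by
    intro r r'
    refine Integrable.mono' (hwint.const_mul C)
      (((hwmeas.mul (hEmeas r)).aestronglyMeasurable).mul (hCcmeas r'))
      (Eventually.of_forall fun y => ?_)
    rw [Real.norm_eq_abs, abs_mul, abs_mul, abs_of_nonneg (hwpos y).le,
      abs_of_nonneg (hEpos r y).le, abs_of_nonneg (hCcmem r' y).1]
    calc w y * E r y * Cc r' y ≤ w y * 1 * C := by
          apply mul_le_mul (mul_le_mul_of_nonneg_left (hEle1 r y) (hwpos y).le)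
            (hCcmem r' y).2 (hCcmem r' y).1 (by positivity)
      _ = C * w y := by ring
  -- sequential continuity of F
  have hseq : ∀ (x : ℕ → R) (p : R), Tendsto x atTop (𝓝 p) →
      Tendsto (F ∘ x) atTop (𝓝 (F p)) := by
    intro x p hx
    -- continuity of the linear pairing with fixed E p
    have hcontΦ : Continuous fun r : R =>
        ∫ y in Ioi (0:ℝ), ∫ u, (w y * E p y * c y u) ∂(ρ r y) := by
      refine hweakstar (fun y u => w y * E p y * c y u) ?_ ?_ ?_
      · exact ((hwmeas.comp measurable_fst).mul ((hEmeas p).comp measurable_fst)).mul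
          hccont.measurable
      · exact fun y => continuous_const.mul (hccont.comp (Continuous.prodMk_right y))
      · have hkey : (fun y => ⨆ u, |w y * E p y * c y u|)
            = fun y => w y * E p y * ⨆ u, |c y u| := by
          funext y
          have hnn : 0 ≤ w y * E p y := mul_nonneg (hwpos y).le (hEpos p y).le
          have : ∀ u, |w y * E p y * c y u| = w y * E p y * |c y u| := fun u => by
            rw [abs_mul, abs_of_nonneg hnn]
          simp only [this]
          exact (Real.mul_iSup_of_nonneg hnn _).symm
        rw [hkey]
        refine Integrable.mono' (hwint.const_mul C)
          (((hwmeas.mul (hEmeas p)).mul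
            (continuous_sup_abs_aux hccont).measurable).aestronglyMeasurable)
          (Eventually.of_forall fun y => ?_)
        have hub : (⨆ u, |c y u|) ≤ C := by
          refine ciSup_le fun u => ?_
          rw [abs_le]
          exact ⟨by linarith [(hcmem y u).1], (hcmem y u).2⟩
        have hnn : 0 ≤ ⨆ u, |c y u| := Real.iSup_nonneg fun u => abs_nonneg _
        rw [Real.norm_eq_abs, abs_mul, abs_mul, abs_of_nonneg (hwpos y).le,
          abs_of_nonneg (hEpos p y).le, abs_of_nonneg hnn]
        calc w y * E p y * ⨆ u, |c y u| ≤ w y * 1 * C := by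
              apply mul_le_mul (mul_le_mul_of_nonneg_left (hEle1 p y) (hwpos y).le)
                hub hnn (by positivity)
          _ = C * w y := by ring
    have hΦeq : ∀ r : R, (∫ y in Ioi (0:ℝ), ∫ u, (w y * E p y * c y u) ∂(ρ r y))
        = ∫ y in Ioi (0:ℝ), w y * E p y * Cc r y := by
      intro r
      simp only [integral_const_mul]; rfl
    have htend2 : Tendsto (fun n => ∫ y in Ioi (0:ℝ), w y * E p y * Cc (x n) y) atTop
        (𝓝 (∫ y in Ioi (0:ℝ), w y * E p y * Cc p y)) := by
      have := (hcontΦ.tendsto p).comp hx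
      simp only [Function.comp_def, hΦeq] at this
      exact this
    have htendE : ∀ y, Tendsto (fun n => E (x n) y) atTop (𝓝 (E p y)) := by
      intro y
      have hΛ := ((hΛcont y).tendsto p).comp hx
      exact (Real.continuous_exp.tendsto _).comp hΛ.neg
    have htend1 : Tendsto (fun n => ∫ y in Ioi (0:ℝ),
        w y * (E (x n) y - E p y) * Cc (x n) y) atTop (𝓝 0) := by
      have key := tendsto_integral_of_dominated_convergence
        (μ := volume.restrict (Ioi (0:ℝ)))
        (F := fun n y => w y * (E (x n) y - E p y) * Cc (x n) y)
        (f := fun _ => (0:ℝ)) (fun y => 2 * C * w y)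
        (fun n => ?_) ?_ (fun n => ?_) ?_
      · simpa using key
      · exact ((hwmeas.mul ((hEmeas (x n)).sub (hEmeas p))).aestronglyMeasurable).mul
          (hCcmeas (x n))
      · exact hwint.const_mul (2 * C)
      · refine Eventually.of_forall fun y => ?_
        rw [Real.norm_eq_abs, abs_mul, abs_mul, abs_of_nonneg (hwpos y).le,
          abs_of_nonneg (hCcmem (x n) y).1]
        have hEd : |E (x n) y - E p y| ≤ 2 := by
          have h1 := hEle1 (x n) y
          have h2 := hEle1 p y
          have h3 := (hEpos (x n) y).le
          have h4 := (hEpos p y).le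
          rw [abs_le]; constructor <;> linarith
        calc w y * |E (x n) y - E p y| * Cc (x n) y ≤ w y * 2 * C := by
              apply mul_le_mul (mul_le_mul_of_nonneg_left hEd (hwpos y).le)
                (hCcmem (x n) y).2 (hCcmem (x n) y).1 (by positivity)
          _ = 2 * C * w y := by ring
      · refine Eventually.of_forall fun y => ?_
        refine squeeze_zero_norm (a := fun n => (w y * C) * |E (x n) y - E p y|) (fun n => ?_) ?_
        · show ‖w y * (E (x n) y - E p y) * Cc (x n) y‖ ≤ (w y * C) * |E (x n) y - E p y|
          rw [Real.norm_eq_abs, abs_mul, abs_mul, abs_of_nonneg (hwpos y).le,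
            abs_of_nonneg (hCcmem (x n) y).1]
          calc w y * |E (x n) y - E p y| * Cc (x n) y
              ≤ w y * |E (x n) y - E p y| * C :=
                mul_le_mul_of_nonneg_left (hCcmem (x n) y).2
                  (mul_nonneg (hwpos y).le (abs_nonneg _))
            _ = (w y * C) * |E (x n) y - E p y| := by ring
        · have hsub : Tendsto (fun n => E (x n) y - E p y) atTop (𝓝 0) := by
            simpa using (htendE y).sub_const (E p y)
          have habs : Tendsto (fun n => |E (x n) y - E p y|) atTop (𝓝 0) := by
            simpa using hsub.abs
          simpa using habs.const_mul (w y * C)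
    -- split F (x n)
    have hsplit : ∀ n, F (x n)
        = (∫ y in Ioi (0:ℝ), w y * (E (x n) y - E p y) * Cc (x n) y)
          + ∫ y in Ioi (0:ℝ), w y * E p y * Cc (x n) y := by
      intro n
      have hptw : (fun y => w y * E (x n) y * Cc (x n) y)
          = fun y => (w y * (E (x n) y - E p y) * Cc (x n) y)
            + w y * E p y * Cc (x n) y := funext fun y => by ring
      have hint1 : Integrable (fun y => w y * (E (x n) y - E p y) * Cc (x n) y)
          (volume.restrict (Ioi (0:ℝ))) := by
        have hptw2 : (fun y => w y * (E (x n) y - E p y) * Cc (x n) y)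
            = fun y => (w y * E (x n) y * Cc (x n) y) - (w y * E p y * Cc (x n) y) :=
          funext fun y => by ring
        rw [hptw2]
        exact (hIint (x n)).sub (hint2 p (x n))
      rw [hFr (x n), hptw, integral_add hint1 (hint2 p (x n))]
    have := htend1.add htend2
    rw [zero_add] at this
    have hfinal : (fun n => (∫ y in Ioi (0:ℝ), w y * (E (x n) y - E p y) * Cc (x n) y)
        + ∫ y in Ioi (0:ℝ), w y * E p y * Cc (x n) y) = F ∘ x := by
      funext n
      rw [Function.comp_apply, hsplit n]
    rw [hfinal] at this
    rw [hFr p]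
    exact this
  have hscF : SeqContinuous F := fun {x} {p} hx => hseq x p hx
  have hcontF : Continuous F := hscF.continuous
  obtain ⟨rs, -, hmin⟩ := isCompact_univ.exists_isMinOn univ_nonempty hcontF.continuousOn
  exact ⟨rs, fun r => hmin (mem_univ r)⟩
end
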